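/- Let x₁ and x₂ be Boolean independent in (A, φ), p = x₁x₂ + x₂x₁ and q = i(x₁x₂ − x₂x₁). Then βₙ(q) = β₂(q)(β₂(x₁)β₂(x₂))^{(n−2)/2} for n even and βₙ(q) = 0 for n odd, where β₂(q) = β₁(x₁)²β₂(x₂) + β₁(x₂)²β₂(x₁). -/

import Mathlib

open Finset
open scoped Classical

/-- Partitions of `{1, ..., n}` (modelled as finpartitions of `Finset.univ : Finset (Fin n)`). -/
abbrev FP (n : ℕ) := Finpartition (Finset.univ : Finset (Fin n))

/-- A partition is an interval partition if each of its blocks is an interval. -/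
def IsIntervalPart {n : ℕ} (P : FP n) : Prop :=
  ∀ B ∈ P.parts, ∀ a b c : Fin n, a ∈ B → c ∈ B → a ≤ b → b ≤ c → b ∈ B

/-- The set `I(n)` of interval partitions of `[n]`. -/
noncomputable def intSet (n : ℕ) : Finset (FP n) := Finset.univ.filter IsIntervalPart

/-- The tuple `a` restricted to the block `B`, listed in increasing order of indices. -/
def blk {A : Type*} {n : ℕ} (a : Fin n → A) (B : Finset (Fin n)) : List A :=
  (B.sort (· ≤ ·)).map a

/-- `β` is the family of Boolean cumulant functionals of `φ`:
`φ(a₁⋯aₙ) = ∑_{π ∈ I(n)} ∏_{V ∈ π} β((a₁,...,aₙ)|_V)`. -/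
def IsBooleanCumulantFamily {A : Type*} [Ring A] [Algebra ℂ A]
    (φ : A →ₗ[ℂ] ℂ) (β : List A → ℂ) : Prop :=
  ∀ (n : ℕ) (a : Fin n → A), 0 < n →
    φ (List.ofFn a).prod = ∑ P ∈ intSet n, ∏ B ∈ P.parts, β (blk a B)

/-- `x₁, x₂` are Boolean independent in `(A, φ)`: `φ` factorizes over alternating
words from the non-unital subalgebras generated by `x₁` resp. `x₂`. -/
def BoolPair {A : Type*} [Ring A] [Algebra ℂ A] (φ : A →ₗ[ℂ] ℂ) (x₁ x₂ : A) : Prop :=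
  ∀ (n : ℕ) (y : Fin n → A) (idx : Fin n → Fin 2),
    (∀ (i : Fin n) (h : i.val + 1 < n), idx i ≠ idx ⟨i.val + 1, h⟩) →
    (∀ i, y i ∈ NonUnitalAlgebra.adjoin ℂ ({![x₁, x₂] (idx i)} : Set A)) →
    φ (List.ofFn y).prod = ∏ i, φ (y i)


/-- the shifted embedding `Fin (n-j) → Fin n` -/
def up (n j : ℕ) : Fin (n - j) → Fin n := fun i => ⟨j + i.val, by omega⟩

lemma up_inj (n j : ℕ) : Function.Injective (up n j) := by
  intro a b h
  simp only [up, Fin.mk.injEq] at h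
  exact Fin.ext (by omega)

/-- the initial block `{0, ..., j-1}` -/
def i0 (n j : ℕ) : Finset (Fin n) := Finset.univ.filter (fun i => i.val < j)

lemma mem_i0 {n j : ℕ} (i : Fin n) : i ∈ i0 n j ↔ i.val < j := by
  simp [i0]

/-- the lifted partition -/
def liftFP (n j : ℕ) (hj : 1 ≤ j) (hjn : j ≤ n) (Q : FP (n - j)) : FP n where
  parts := insert (i0 n j) (Q.parts.image (fun B => B.image (up n j)))
  supIndep := by
    rw [Finset.supIndep_iff_pairwiseDisjoint]
    intro X hX Y hY hXY
    simp only [Finset.coe_insert, Set.mem_insert_iff, Finset.mem_coe,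
      Finset.mem_image] at hX hY
    have key : ∀ B ∈ Q.parts, ∀ i ∈ B.image (up n j), j ≤ i.val := by
      intro B hB i hi
      simp only [Finset.mem_image] at hi
      obtain ⟨i', _, rfl⟩ := hi
      simp [up]
    rcases hX with rfl | ⟨B, hB, rfl⟩ <;> rcases hY with rfl | ⟨C, hC, rfl⟩ <;>
      simp only [Function.onFun, id_eq]
    · exact absurd rfl hXY
    · rw [Finset.disjoint_left]
      intro i hi hi'
      rw [mem_i0] at hi
      exact absurd (key C hC i hi') (by omega)
    · rw [Finset.disjoint_left]
      intro i hi hi'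
      rw [mem_i0] at hi'
      exact absurd (key B hB i hi) (by omega)
    · have hBC : B ≠ C := fun h => hXY (by rw [h])
      have := Q.disjoint hB hC hBC
      simp only [Function.onFun, id_eq] at this
      rw [Finset.disjoint_left] at this ⊢
      intro i hi hi'
      simp only [Finset.mem_image] at hi hi'
      obtain ⟨a, ha, rfl⟩ := hi
      obtain ⟨b, hb, hba⟩ := hi'
      exact this ha (by rwa [up_inj n j hba] at hb)
  sup_parts := by
    apply Finset.Subset.antisymm (Finset.subset_univ _)
    intro i _
    rw [Finset.mem_sup]
    by_cases h : i.val < j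
    · exact ⟨i0 n j, Finset.mem_insert_self _ _, (mem_i0 i).2 h⟩
    · push_neg at h
      have hlt : i.val - j < n - j := by omega
      set i' : Fin (n - j) := ⟨i.val - j, hlt⟩ with hi'
      obtain ⟨B, hB, hiB⟩ := Q.exists_mem (Finset.mem_univ i')
      refine ⟨B.image (up n j), Finset.mem_insert_of_mem ?_, ?_⟩
      · exact Finset.mem_image_of_mem _ hB
      · simp only [id_eq, Finset.mem_image]
        exact ⟨i', hiB, by simp only [up, hi']; exact Fin.ext (by simp; omega)⟩
  bot_notMem := by
    simp only [Finset.bot_eq_empty, Finset.mem_insert, Finset.mem_image]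
    push_neg
    constructor
    · intro h
      have : (⟨0, by omega⟩ : Fin n) ∈ i0 n j := (mem_i0 _).2 hj
      rw [← h] at this
      exact absurd this (Finset.notMem_empty _)
    · intro B hB
      obtain ⟨i, hi⟩ := Q.nonempty_of_mem_parts hB
      have : up n j i ∈ B.image (up n j) := Finset.mem_image_of_mem _ hi
      exact ⟨_, this⟩

lemma i0_not_mem_image {n j : ℕ} (hj : 1 ≤ j) (hn : 1 ≤ n) (s : Finset (Finset (Fin (n - j))))
    (hs : ∅ ∉ s) : i0 n j ∉ s.image (fun B => B.image (up n j)) := by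
  intro h
  simp only [Finset.mem_image] at h
  obtain ⟨B, hB, hBe⟩ := h
  have h0 : (⟨0, by omega⟩ : Fin n) ∈ i0 n j := (mem_i0 _).2 hj
  rw [← hBe] at h0
  simp only [Finset.mem_image] at h0
  obtain ⟨i, _, hi⟩ := h0
  have : j + i.val = 0 := congrArg Fin.val hi
  omega

lemma liftFP_parts (n j : ℕ) (hj : 1 ≤ j) (hjn : j ≤ n) (Q : FP (n - j)) :
    (liftFP n j hj hjn Q).parts = insert (i0 n j) (Q.parts.image (fun B => B.image (up n j))) := rfl

lemma liftFP_interval (n j : ℕ) (hj : 1 ≤ j) (hjn : j ≤ n) (Q : FP (n - j))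
    (hQ : IsIntervalPart Q) : IsIntervalPart (liftFP n j hj hjn Q) := by
  intro B hB a b c ha hc hab hbc
  rw [liftFP_parts, Finset.mem_insert] at hB
  rcases hB with rfl | hB
  · rw [mem_i0] at ha hc ⊢
    have : b.val ≤ c.val := hbc
    omega
  · simp only [Finset.mem_image] at hB
    obtain ⟨C, hC, rfl⟩ := hB
    simp only [Finset.mem_image] at ha hc ⊢
    obtain ⟨a', ha', rfl⟩ := ha
    obtain ⟨c', hc', rfl⟩ := hc
    have hab' : j + a'.val ≤ b.val := hab
    have hbc' : b.val ≤ j + c'.val := hbc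
    have hblt : b.val - j < n - j := by have := c'.isLt; omega
    refine ⟨⟨b.val - j, hblt⟩, hQ C hC a' ⟨b.val - j, hblt⟩ c' ha' hc' ?_ ?_, ?_⟩
    · show a'.val ≤ b.val - j; omega
    · show b.val - j ≤ c'.val; omega
    · exact Fin.ext (by simp [up]; omega)

lemma card_i0 {n j : ℕ} (hjn : j ≤ n) : (i0 n j).card = j := by
  have : i0 n j = Finset.map (Fin.castLEEmb hjn) (Finset.univ : Finset (Fin j)) := by
    ext i
    simp only [mem_i0, Finset.mem_map, Finset.mem_univ, true_and]
    constructor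
    · intro h
      exact ⟨⟨i.val, h⟩, Fin.ext rfl⟩
    · rintro ⟨i', rfl⟩
      exact i'.isLt
  rw [this, Finset.card_map, Finset.card_univ, Fintype.card_fin]

lemma liftFP_prod (g : ℕ → ℂ) (n j : ℕ) (hj : 1 ≤ j) (hjn : j ≤ n) (Q : FP (n - j)) :
    ∏ B ∈ (liftFP n j hj hjn Q).parts, g B.card = g j * ∏ B ∈ Q.parts, g B.card := by
  rw [liftFP_parts, Finset.prod_insert
    (i0_not_mem_image hj (le_trans hj hjn) _ (by simpa using Q.not_bot_mem)),
    Finset.prod_image (fun B hB C hC h => Finset.image_injective (up_inj n j) h),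
    card_i0 hjn]
  congr 1
  apply Finset.prod_congr rfl
  intro B _
  rw [Finset.card_image_of_injective _ (up_inj n j)]

lemma i0_inj {n j j' : ℕ} (hjn : j ≤ n) (hjn' : j' ≤ n) (h : i0 n j = i0 n j') : j = j' := by
  rcases lt_trichotomy j j' with hlt | he | hlt
  · have : (⟨j, by omega⟩ : Fin n) ∈ i0 n j' := (mem_i0 _).2 hlt
    rw [← h, mem_i0] at this
    simp at this
  · exact he
  · have : (⟨j', by omega⟩ : Fin n) ∈ i0 n j := (mem_i0 _).2 hlt
    rw [h, mem_i0] at this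
    simp at this

lemma liftFP_inj {n j j' : ℕ} (hj : 1 ≤ j) (hjn : j ≤ n) (hj' : 1 ≤ j') (hjn' : j' ≤ n)
    {Q : FP (n - j)} {Q' : FP (n - j')}
    (h : liftFP n j hj hjn Q = liftFP n j' hj' hjn' Q') :
    ∃ (hjj : j = j'), Q = hjj ▸ Q' := by
  have hparts := congrArg Finpartition.parts h
  rw [liftFP_parts, liftFP_parts] at hparts
  have hnotmem := i0_not_mem_image hj (le_trans hj hjn) Q.parts (by simpa using Q.not_bot_mem)
  have hnotmem' := i0_not_mem_image hj' (le_trans hj' hjn') Q'.parts (by simpa using Q'.not_bot_mem)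
  have hi0 : i0 n j = i0 n j' := by
    have hmem : i0 n j ∈ insert (i0 n j') (Q'.parts.image (fun B => B.image (up n j'))) := by
      rw [← hparts]; exact Finset.mem_insert_self _ _
    rcases Finset.mem_insert.1 hmem with he | hmem
    · exact he
    · exfalso
      simp only [Finset.mem_image] at hmem
      obtain ⟨B, hB, hBe⟩ := hmem
      have h0 : (⟨0, by omega⟩ : Fin n) ∈ i0 n j := (mem_i0 _).2 hj
      rw [← hBe] at h0
      simp only [Finset.mem_image] at h0
      obtain ⟨i, _, hi⟩ := h0
      have : j' + i.val = 0 := congrArg Fin.val hi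
      omega
  have hjj : j = j' := i0_inj hjn hjn' hi0
  subst hjj
  refine ⟨rfl, ?_⟩
  rw [hi0] at hparts hnotmem
  have himg := Finset.erase_insert hnotmem ▸ Finset.erase_insert hnotmem' ▸
    congrArg (fun s => Finset.erase s (i0 n j)) hparts
  exact Finpartition.ext (Finset.image_injective
    (Finset.image_injective (up_inj n j)) himg)

lemma exists_lift {n : ℕ} (hn : 1 ≤ n) (P : FP n) (hP : IsIntervalPart P) :
    ∃ (j : ℕ) (hj : 1 ≤ j) (hjn : j ≤ n) (Q : FP (n - j)),
      IsIntervalPart Q ∧ liftFP n j hj hjn Q = P := by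
  have h0 : (⟨0, by omega⟩ : Fin n) ∈ (Finset.univ : Finset (Fin n)) := Finset.mem_univ _
  set z : Fin n := ⟨0, by omega⟩ with hz
  set B₀ := P.part z with hB₀
  have hB₀mem : B₀ ∈ P.parts := P.part_mem.2 h0
  have hzB₀ : z ∈ B₀ := P.mem_part h0
  set j := B₀.card with hj'
  -- B₀ is downward closed
  have hdc : ∀ i ∈ B₀, ∀ k : Fin n, k ≤ i → k ∈ B₀ := by
    intro i hi k hk
    exact hP B₀ hB₀mem z k i hzB₀ hi (by exact Nat.zero_le _) hk
  have hjn : j ≤ n := by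
    have := Finset.card_le_card (Finset.subset_univ B₀)
    rwa [Finset.card_univ, Fintype.card_fin] at this
  have hi0 : B₀ = i0 n j := by
    ext i
    rw [mem_i0]
    constructor
    · intro hi
      have hsub : i0 n (i.val + 1) ⊆ B₀ := by
        intro k hk
        rw [mem_i0] at hk
        exact hdc i hi k (by omega)
      have := Finset.card_le_card hsub
      rw [card_i0 (by omega)] at this
      omega
    · intro hi
      by_contra hiB
      have hsub : B₀ ⊆ i0 n i.val := by
        intro b hb
        rw [mem_i0]
        by_contra hbi
        push_neg at hbi
        have : i ≤ b := by
          rcases Nat.lt_or_ge i.val b.val with h | h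
          · exact le_of_lt h
          · have : i.val = b.val := by omega
            exact le_of_eq (Fin.ext this)
        exact hiB (hdc b hb i this)
      have := Finset.card_le_card hsub
      rw [card_i0 (by omega)] at this
      omega
  have hj : 1 ≤ j := Finset.card_pos.2 ⟨z, hzB₀⟩
  -- the remaining blocks
  set E := P.parts.erase B₀ with hE
  have high : ∀ B ∈ E, ∀ i ∈ B, j ≤ i.val := by
    intro B hB i hi
    by_contra hij
    push_neg at hij
    have hiB₀ : i ∈ B₀ := by rw [hi0, mem_i0]; exact hij
    have hBne : B ≠ B₀ := Finset.ne_of_mem_erase hB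
    exact hBne (P.eq_of_mem_parts (Finset.mem_of_mem_erase hB) hB₀mem hi hiB₀)
  set down : Finset (Fin n) → Finset (Fin (n - j)) :=
    fun B => Finset.univ.filter (fun i' => up n j i' ∈ B) with hdown
  have upDown : ∀ B ∈ E, (down B).image (up n j) = B := by
    intro B hB
    ext i
    simp only [hdown, Finset.mem_image, Finset.mem_filter, Finset.mem_univ, true_and]
    constructor
    · rintro ⟨i', hi', rfl⟩; exact hi'
    · intro hi
      have hji : j ≤ i.val := high B hB i hi
      refine ⟨⟨i.val - j, by omega⟩, ?_, ?_⟩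
      · have : up n j ⟨i.val - j, by omega⟩ = i := Fin.ext (by simp [up]; omega)
        rwa [this]
      · exact Fin.ext (by simp [up]; omega)
  have hdownInj : ∀ B ∈ E, ∀ C ∈ E, down B = down C → B = C := by
    intro B hB C hC h
    rw [← upDown B hB, ← upDown C hC, h]
  refine ⟨j, hj, hjn, ⟨E.image down, ?_, ?_, ?_⟩, ?_, ?_⟩
  · -- supIndep
    rw [Finset.supIndep_iff_pairwiseDisjoint]
    intro X hX Y hY hXY
    simp only [Finset.coe_image, Set.mem_image, Finset.mem_coe] at hX hY
    obtain ⟨B, hB, rfl⟩ := hX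
    obtain ⟨C, hC, rfl⟩ := hY
    have hBC : B ≠ C := fun h => hXY (by rw [h])
    have hdisj := P.disjoint (Finset.mem_of_mem_erase hB) (Finset.mem_of_mem_erase hC) hBC
    simp only [Function.onFun, id_eq] at hdisj ⊢
    rw [Finset.disjoint_left] at hdisj ⊢
    intro i' hi' hi''
    simp only [hdown, Finset.mem_filter] at hi' hi''
    exact hdisj hi'.2 hi''.2
  · -- sup_parts
    apply Finset.Subset.antisymm (Finset.subset_univ _)
    intro i' _
    rw [Finset.mem_sup]
    have hup : up n j i' ∈ (Finset.univ : Finset (Fin n)) := Finset.mem_univ _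
    obtain ⟨B, hB, hiB⟩ := P.exists_mem hup
    have hBE : B ∈ E := by
      rw [hE, Finset.mem_erase]
      refine ⟨?_, hB⟩
      intro h
      rw [h, hi0, mem_i0] at hiB
      simp [up] at hiB
    exact ⟨down B, Finset.mem_image_of_mem _ hBE,
      by simp only [hdown, id_eq, Finset.mem_filter, Finset.mem_univ, true_and]; exact hiB⟩
  · -- not_bot_mem
    simp only [Finset.bot_eq_empty, Finset.mem_image]
    rintro ⟨B, hB, hBe⟩
    obtain ⟨i, hi⟩ := P.nonempty_of_mem_parts (Finset.mem_of_mem_erase hB)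
    have hji : j ≤ i.val := high B hB i hi
    have : (⟨i.val - j, by omega⟩ : Fin (n - j)) ∈ down B := by
      simp only [hdown, Finset.mem_filter, Finset.mem_univ, true_and]
      have : up n j ⟨i.val - j, by omega⟩ = i := Fin.ext (by simp [up]; omega)
      rwa [this]
    rw [hBe] at this
    exact absurd this (Finset.notMem_empty _)
  · -- interval
    intro B' hB' a' b' c' ha' hc' hab' hbc'
    simp only [Finset.mem_image] at hB'
    obtain ⟨B, hB, rfl⟩ := hB'
    simp only [hdown, Finset.mem_filter, Finset.mem_univ, true_and] at ha' hc' ⊢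
    refine hP B (Finset.mem_of_mem_erase hB) (up n j a') (up n j b') (up n j c') ha' hc' ?_ ?_
    · show j + a'.val ≤ j + b'.val
      have : a'.val ≤ b'.val := hab'
      omega
    · show j + b'.val ≤ j + c'.val
      have : b'.val ≤ c'.val := hbc'
      omega
  · -- lift = P
    apply Finpartition.ext
    rw [liftFP_parts]
    show insert (i0 n j) ((E.image down).image (fun B => B.image (up n j))) = P.parts
    rw [Finset.image_image]
    have : E.image ((fun B => B.image (up n j)) ∘ down) = E := by
      apply Finset.image_congr ?_ |>.trans (Finset.image_id)
      intro B hB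
      exact upDown B hB
    rw [this, ← hi0, hE, Finset.insert_erase hB₀mem]

lemma parts_eq_empty (P : FP 0) : P.parts = ∅ := by
  rw [Finset.eq_empty_iff_forall_notMem]
  intro B hB
  obtain ⟨i, _⟩ := P.nonempty_of_mem_parts hB
  exact i.elim0

lemma intSet_zero_sum (g : ℕ → ℂ) : ∑ P ∈ intSet 0, ∏ B ∈ P.parts, g B.card = 1 := by
  have h2 : intSet 0 = {⊥} := by
    apply Finset.eq_singleton_iff_unique_mem.2
    constructor
    · exact Finset.mem_filter.2 ⟨Finset.mem_univ _, fun B hB a => a.elim0⟩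
    · intro P _
      exact Finpartition.ext (by rw [parts_eq_empty, parts_eq_empty])
  rw [h2, Finset.sum_singleton, parts_eq_empty, Finset.prod_empty]

lemma sum_intSet_rec (g : ℕ → ℂ) {n : ℕ} (hn : 1 ≤ n) :
    ∑ P ∈ intSet n, ∏ B ∈ P.parts, g B.card
      = ∑ j ∈ Finset.Icc 1 n, g j * ∑ Q ∈ intSet (n - j), ∏ B ∈ Q.parts, g B.card := by
  have hc : ∀ j ∈ Finset.Icc 1 n, g j * ∑ Q ∈ intSet (n - j), ∏ B ∈ Q.parts, g B.card
      = ∑ Q ∈ intSet (n - j), g j * ∏ B ∈ Q.parts, g B.card := fun j _ => Finset.mul_sum _ _ _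
  rw [Finset.sum_congr rfl hc, Finset.sum_sigma']
  symm
  refine Finset.sum_bij (i := fun p hp => liftFP n p.1
    (Finset.mem_Icc.1 (Finset.mem_sigma.1 hp).1).1
    (Finset.mem_Icc.1 (Finset.mem_sigma.1 hp).1).2 p.2) ?_ ?_ ?_ ?_
  · intro p hp
    refine Finset.mem_filter.2 ⟨Finset.mem_univ _, ?_⟩
    apply liftFP_interval
    have := (Finset.mem_sigma.1 hp).2
    exact (Finset.mem_filter.1 this).2
  · intro p hp q hq h
    obtain ⟨hjj, hQ⟩ := liftFP_inj _ _ _ _ h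
    obtain ⟨j, Q⟩ := p
    obtain ⟨j', Q'⟩ := q
    dsimp only at hjj hQ
    subst hjj
    simp only at hQ
    subst hQ
    rfl
  · intro b hb
    obtain ⟨j, hj, hjn, Q, hQint, hlift⟩ := exists_lift hn b (Finset.mem_filter.1 hb).2
    refine ⟨⟨j, Q⟩, Finset.mem_sigma.2 ⟨Finset.mem_Icc.2 ⟨hj, hjn⟩,
      Finset.mem_filter.2 ⟨Finset.mem_univ _, hQint⟩⟩, hlift⟩
  · intro p hp
    exact (liftFP_prod g n p.1 _ _ p.2).symm
lemma ofFn_get_map {α β : Type*} (f : α → β) (l : List α) :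
    List.ofFn (fun i : Fin l.length => f (l.get i)) = l.map f := by
  induction l with
  | nil => rfl
  | cons a l ih => simp [List.ofFn_succ, ih]

lemma pow_mem_adjoin {A : Type*} [Ring A] [Algebra ℂ A] (x : A) (k : ℕ) (hk : 1 ≤ k) :
    x ^ k ∈ NonUnitalAlgebra.adjoin ℂ ({x} : Set A) := by
  induction k with
  | zero => omega
  | succ k ih =>
    rcases Nat.eq_or_lt_of_le hk with h | h
    · rw [← h, pow_one]
      exact NonUnitalAlgebra.self_mem_adjoin_singleton ℂ x
    · rw [pow_succ]
      exact mul_mem (ih (by omega)) (NonUnitalAlgebra.self_mem_adjoin_singleton ℂ x)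

/-- factorization of `φ` over an alternating word of powers -/
lemma phi_prod_letters {A : Type*} [Ring A] [Algebra ℂ A] (φ : A →ₗ[ℂ] ℂ)
    (x₁ x₂ : A) (hbool : BoolPair φ x₁ x₂)
    (L : List (Fin 2 × ℕ)) (hL : List.Chain' (fun p q => p.1 ≠ q.1) L)
    (hpos : ∀ p ∈ L, 1 ≤ p.2) :
    φ ((L.map (fun p => ![x₁, x₂] p.1 ^ p.2)).prod)
      = (L.map (fun p => φ (![x₁, x₂] p.1 ^ p.2))).prod := by
  have h1 := hbool L.length (fun i => ![x₁, x₂] (L.get i).1 ^ (L.get i).2)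
    (fun i => (L.get i).1)
    (by
      intro i h
      unfold List.Chain' at hL
      rw [List.isChain_iff_getElem] at hL
      exact hL i.val (by omega))
    (by
      intro i
      exact pow_mem_adjoin _ _ (hpos _ (List.get_mem L i)))
  rw [ofFn_get_map (fun p => ![x₁, x₂] p.1 ^ p.2) L] at h1
  rw [h1, ← List.prod_ofFn]
  exact congrArg List.prod (ofFn_get_map (fun p => φ (![x₁, x₂] p.1 ^ p.2)) L)

def FB : Bool → Fin 2 := fun b => if b then 0 else 1
def SB : Bool → Fin 2 := fun b => if b then 1 else 0

section BM

variable {A : Type*} [Ring A] [Algebra ℂ A]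

/-- one factor of the commutator -/
def ub (x₁ x₂ : A) (b : Bool) : A := ![x₁, x₂] (FB b) * ![x₁, x₂] (SB b)

/-- the letters (with exponents) of the word indexed by a sign sequence, after the first -/
def tailL : Bool → List Bool → List (Fin 2 × ℕ)
  | b, [] => [(SB b, 1)]
  | b, b' :: l =>
    if b = b' then (SB b, 1) :: (FB b', 1) :: tailL b' l else (SB b, 2) :: tailL b' l

/-- the φ-weight of the word after the first letter -/
def KT (φ : A →ₗ[ℂ] ℂ) (x₁ x₂ : A) : Bool → List Bool → ℂ
  | b, [] => φ (![x₁, x₂] (SB b))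
  | b, b' :: l =>
    if b = b' then φ (![x₁, x₂] (SB b)) * (φ (![x₁, x₂] (FB b')) * KT φ x₁ x₂ b' l)
    else φ (![x₁, x₂] (SB b) ^ 2) * KT φ x₁ x₂ b' l

lemma tailL_head (l : List Bool) (b : Bool) :
    ∃ e t, tailL b l = (SB b, e) :: t := by
  cases l with
  | nil => exact ⟨1, [], rfl⟩
  | cons b' l =>
    by_cases h : b = b' <;> simp only [tailL, h, if_true, if_false, reduceIte]
    · exact ⟨1, _, rfl⟩
    · exact ⟨2, _, rfl⟩

lemma FB_ne_SB (b : Bool) : FB b ≠ SB b := by cases b <;> decide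

lemma SB_eq_FB {b b' : Bool} (h : b ≠ b') : SB b = FB b' := by
  cases b <;> cases b' <;> first | rfl | exact absurd rfl h

lemma SB_ne_SB {b b' : Bool} (h : b ≠ b') : SB b ≠ SB b' := by
  cases b <;> cases b' <;> first | exact absurd rfl h | decide

lemma chain_letters (l : List Bool) (b : Bool) :
    List.Chain' (fun p q : Fin 2 × ℕ => p.1 ≠ q.1) ((FB b, 1) :: tailL b l) := by
  induction l generalizing b with
  | nil => simp [tailL]; exact List.isChain_pair.2 (FB_ne_SB b)
  | cons b' l ih =>
    unfold List.Chain' at ih ⊢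
    by_cases h : b = b'
    · subst h
      simp only [tailL, if_true, reduceIte]
      rw [List.isChain_cons_cons, List.isChain_cons_cons]
      exact ⟨FB_ne_SB b, (FB_ne_SB b).symm, ih b⟩
    · simp only [tailL, h, if_false, reduceIte]
      rw [List.isChain_cons_cons]
      refine ⟨FB_ne_SB b, ?_⟩
      rw [List.isChain_cons]
      refine ⟨?_, (ih b').tail⟩
      intro y hy
      obtain ⟨e, t, ht⟩ := tailL_head l b'
      rw [ht] at hy
      simp only [List.head?_cons, Option.mem_def, Option.some.injEq] at hy
      subst hy
      show SB b ≠ SB b'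
      exact SB_ne_SB h

lemma pos_letters (l : List Bool) (b : Bool) :
    ∀ p ∈ (FB b, 1) :: tailL b l, 1 ≤ p.2 := by
  induction l generalizing b with
  | nil =>
    intro p hp
    rcases List.mem_cons.1 hp with h | h
    · subst h; exact le_refl 1
    · simp only [tailL, List.mem_singleton] at h
      subst h; exact le_refl 1
  | cons b' l ih =>
    intro p hp
    rcases List.mem_cons.1 hp with h | h
    · subst h; exact le_refl 1
    · by_cases hbb : b = b' <;> simp only [tailL, hbb, reduceIte, if_true, if_false] at h
      · rcases List.mem_cons.1 h with h1 | h1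
        · subst h1; exact le_refl 1
        · exact ih b' p h1
      · rcases List.mem_cons.1 h with h1 | h1
        · subst h1; exact one_le_two
        · exact ih b' p (List.mem_cons.2 (Or.inr h1))

lemma tail_prod (x₁ x₂ : A) (l : List Bool) (b : Bool) :
    ![x₁, x₂] (FB b) * ((tailL b l).map (fun p => ![x₁, x₂] p.1 ^ p.2)).prod
      = ((b :: l).map (ub x₁ x₂)).prod := by
  induction l generalizing b with
  | nil => simp [tailL, ub, pow_one]
  | cons b' l ih =>
    by_cases h : b = b'
    · subst h
      simp only [tailL, reduceIte, List.map_cons, List.prod_cons, pow_one]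
      have ihb := ih b
      simp only [List.map_cons, List.prod_cons] at ihb
      rw [← ihb]
      simp only [ub, mul_assoc]
    · simp only [tailL, h, reduceIte, List.map_cons, List.prod_cons]
      have ihb := ih b'
      simp only [List.map_cons, List.prod_cons] at ihb
      rw [← ihb]
      simp only [ub, pow_two, SB_eq_FB h, mul_assoc]

lemma tail_phi (φ : A →ₗ[ℂ] ℂ) (x₁ x₂ : A) (l : List Bool) (b : Bool) :
    ((tailL b l).map (fun p => φ (![x₁, x₂] p.1 ^ p.2))).prod = KT φ x₁ x₂ b l := by
  induction l generalizing b with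
  | nil => simp [tailL, KT, pow_one]
  | cons b' l ih =>
    by_cases h : b = b'
    · subst h
      simp only [tailL, KT, if_true, reduceIte, List.map_cons, List.prod_cons, pow_one, ih b]
    · simp only [tailL, KT, h, if_false, reduceIte, List.map_cons, List.prod_cons, ih b']

lemma phi_word (φ : A →ₗ[ℂ] ℂ) (x₁ x₂ : A) (hbool : BoolPair φ x₁ x₂)
    (l : List Bool) (b : Bool) :
    φ (((b :: l).map (ub x₁ x₂)).prod) = φ (![x₁, x₂] (FB b)) * KT φ x₁ x₂ b l := by
  rw [← tail_prod x₁ x₂ l b]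
  have key := phi_prod_letters φ x₁ x₂ hbool ((FB b, 1) :: tailL b l)
    (chain_letters l b) (pos_letters l b)
  simp only [List.map_cons, List.prod_cons, pow_one] at key
  rw [key, tail_phi]

end BM

section EXP

variable {A : Type*} [Ring A] [Algebra ℂ A]

def sgnf {n : ℕ} (f : Fin n → Bool) : ℂ := ∏ i, (if f i then (1:ℂ) else -1)

lemma ofFn_cons {α : Type*} {n : ℕ} (b : α) (g : Fin n → α) :
    List.ofFn (Fin.cons b g) = b :: List.ofFn g := by
  simp [List.ofFn_succ]

lemma sgnf_cons {n : ℕ} (b : Bool) (g : Fin n → Bool) :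
    sgnf (Fin.cons b g) = (if b then (1:ℂ) else -1) * sgnf g := by
  simp [sgnf, Fin.prod_univ_succ]

lemma sum_fun_succ {M : Type*} [AddCommMonoid M] (n : ℕ) (F : (Fin (n+1) → Bool) → M) :
    ∑ f : Fin (n+1) → Bool, F f
      = (∑ g : Fin n → Bool, F (Fin.cons true g)) + ∑ g : Fin n → Bool, F (Fin.cons false g) := by
  rw [← Fintype.sum_equiv (Fin.consEquiv (fun _ : Fin (n+1) => Bool))
    (fun p => F (Fin.cons p.1 p.2)) F (fun p => rfl)]
  rw [Fintype.sum_prod_type, Fintype.sum_bool]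

lemma D_pow (x₁ x₂ : A) (n : ℕ) :
    (ub x₁ x₂ true - ub x₁ x₂ false) ^ n
      = ∑ f : Fin n → Bool, sgnf f • ((List.ofFn f).map (ub x₁ x₂)).prod := by
  induction n with
  | zero =>
    rw [pow_zero]
    rw [Finset.univ_unique, Finset.sum_singleton]
    simp [sgnf]
  | succ n ih =>
    rw [pow_succ', ih, Finset.mul_sum, sum_fun_succ n
      (fun f => sgnf f • ((List.ofFn f).map (ub x₁ x₂)).prod)]
    have h1 : ∀ g : Fin n → Bool,
        sgnf (Fin.cons true g) • ((List.ofFn (Fin.cons true g)).map (ub x₁ x₂)).prod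
        = ub x₁ x₂ true * (sgnf g • ((List.ofFn g).map (ub x₁ x₂)).prod) := by
      intro g
      rw [ofFn_cons, sgnf_cons, List.map_cons, List.prod_cons]
      rw [mul_smul_comm]
      simp
    have h2 : ∀ g : Fin n → Bool,
        sgnf (Fin.cons false g) • ((List.ofFn (Fin.cons false g)).map (ub x₁ x₂)).prod
        = -(ub x₁ x₂ false * (sgnf g • ((List.ofFn g).map (ub x₁ x₂)).prod)) := by
      intro g
      rw [ofFn_cons, sgnf_cons, List.map_cons, List.prod_cons]
      rw [mul_smul_comm]
      simp [neg_one_mul]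
    rw [Finset.sum_congr rfl (fun g _ => h1 g), Finset.sum_congr rfl (fun g _ => h2 g),
      ← Finset.sum_add_distrib]
    apply Finset.sum_congr rfl
    intro g _
    rw [sub_mul, sub_eq_add_neg]

noncomputable def GFn (φ : A →ₗ[ℂ] ℂ) (x₁ x₂ : A) (b : Bool) (n : ℕ) : ℂ :=
  ∑ f : Fin n → Bool, sgnf f * KT φ x₁ x₂ b (List.ofFn f)

lemma GFn_zero (φ : A →ₗ[ℂ] ℂ) (x₁ x₂ : A) (b : Bool) :
    GFn φ x₁ x₂ b 0 = φ (![x₁, x₂] (SB b)) := by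
  rw [GFn, Finset.univ_unique, Finset.sum_singleton]
  simp [sgnf, KT]

lemma GFn_succ_true (φ : A →ₗ[ℂ] ℂ) (x₁ x₂ : A) (n : ℕ) :
    GFn φ x₁ x₂ true (n+1)
      = φ (![x₁, x₂] 1) * φ (![x₁, x₂] 0) * GFn φ x₁ x₂ true n
        - φ (![x₁, x₂] 1 ^ 2) * GFn φ x₁ x₂ false n := by
  rw [GFn, sum_fun_succ]
  have h1 : ∀ g : Fin n → Bool,
      sgnf (Fin.cons true g) * KT φ x₁ x₂ true (List.ofFn (Fin.cons true g))
      = φ (![x₁, x₂] 1) * φ (![x₁, x₂] 0) * (sgnf g * KT φ x₁ x₂ true (List.ofFn g)) := by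
    intro g
    rw [ofFn_cons, sgnf_cons]
    simp only [KT, SB, FB, Bool.false_eq_true, Bool.true_eq_false, if_true, if_false, reduceIte]
    ring
  have h2 : ∀ g : Fin n → Bool,
      sgnf (Fin.cons false g) * KT φ x₁ x₂ true (List.ofFn (Fin.cons false g))
      = -(φ (![x₁, x₂] 1 ^ 2) * (sgnf g * KT φ x₁ x₂ false (List.ofFn g))) := by
    intro g
    rw [ofFn_cons, sgnf_cons]
    simp only [KT, SB, FB, Bool.false_eq_true, Bool.true_eq_false, if_true, if_false, reduceIte]
    ring
  rw [Finset.sum_congr rfl (fun g _ => h1 g), Finset.sum_congr rfl (fun g _ => h2 g)]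
  rw [Finset.sum_neg_distrib, ← Finset.mul_sum, ← Finset.mul_sum, ← sub_eq_add_neg]
  rfl

lemma GFn_succ_false (φ : A →ₗ[ℂ] ℂ) (x₁ x₂ : A) (n : ℕ) :
    GFn φ x₁ x₂ false (n+1)
      = φ (![x₁, x₂] 0 ^ 2) * GFn φ x₁ x₂ true n
        - φ (![x₁, x₂] 0) * φ (![x₁, x₂] 1) * GFn φ x₁ x₂ false n := by
  rw [GFn, sum_fun_succ]
  have h1 : ∀ g : Fin n → Bool,
      sgnf (Fin.cons true g) * KT φ x₁ x₂ false (List.ofFn (Fin.cons true g))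
      = φ (![x₁, x₂] 0 ^ 2) * (sgnf g * KT φ x₁ x₂ true (List.ofFn g)) := by
    intro g
    rw [ofFn_cons, sgnf_cons]
    simp only [KT, SB, FB, Bool.false_eq_true, Bool.true_eq_false, if_true, if_false, reduceIte]
    ring
  have h2 : ∀ g : Fin n → Bool,
      sgnf (Fin.cons false g) * KT φ x₁ x₂ false (List.ofFn (Fin.cons false g))
      = -(φ (![x₁, x₂] 0) * φ (![x₁, x₂] 1) * (sgnf g * KT φ x₁ x₂ false (List.ofFn g))) := by
    intro g
    rw [ofFn_cons, sgnf_cons]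
    simp only [KT, SB, FB, Bool.false_eq_true, Bool.true_eq_false, if_true, if_false, reduceIte]
    ring
  rw [Finset.sum_congr rfl (fun g _ => h1 g), Finset.sum_congr rfl (fun g _ => h2 g)]
  rw [Finset.sum_neg_distrib, ← Finset.mul_sum, ← Finset.mul_sum, ← sub_eq_add_neg]
  rfl

lemma phi_D_pow (φ : A →ₗ[ℂ] ℂ) (x₁ x₂ : A) (hbool : BoolPair φ x₁ x₂) (n : ℕ) :
    φ ((ub x₁ x₂ true - ub x₁ x₂ false) ^ (n+1))
      = φ (![x₁, x₂] 0) * GFn φ x₁ x₂ true n - φ (![x₁, x₂] 1) * GFn φ x₁ x₂ false n := by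
  rw [D_pow, map_sum, sum_fun_succ n
    (fun f => φ (sgnf f • ((List.ofFn f).map (ub x₁ x₂)).prod))]
  have h1 : ∀ g : Fin n → Bool,
      φ (sgnf (Fin.cons true g) • ((List.ofFn (Fin.cons true g)).map (ub x₁ x₂)).prod)
      = φ (![x₁, x₂] 0) * (sgnf g * KT φ x₁ x₂ true (List.ofFn g)) := by
    intro g
    rw [map_smul, smul_eq_mul, ofFn_cons, sgnf_cons, phi_word φ x₁ x₂ hbool]
    simp only [FB, Bool.false_eq_true, if_true, if_false, reduceIte]
    ring
  have h2 : ∀ g : Fin n → Bool,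
      φ (sgnf (Fin.cons false g) • ((List.ofFn (Fin.cons false g)).map (ub x₁ x₂)).prod)
      = -(φ (![x₁, x₂] 1) * (sgnf g * KT φ x₁ x₂ false (List.ofFn g))) := by
    intro g
    rw [map_smul, smul_eq_mul, ofFn_cons, sgnf_cons, phi_word φ x₁ x₂ hbool]
    simp only [FB, Bool.false_eq_true, if_true, if_false, reduceIte]
    ring
  rw [Finset.sum_congr rfl (fun g _ => h1 g), Finset.sum_congr rfl (fun g _ => h2 g)]
  rw [Finset.sum_neg_distrib, ← Finset.mul_sum, ← Finset.mul_sum, ← sub_eq_add_neg]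
  rfl

end EXP

section MOM

variable {A : Type*} [Ring A] [Algebra ℂ A]

noncomputable def c2 (φ : A →ₗ[ℂ] ℂ) (x₁ x₂ : A) : ℂ :=
  (φ x₁) ^ 2 * (φ (x₂ ^ 2) - (φ x₂) ^ 2) + (φ x₂) ^ 2 * (φ (x₁ ^ 2) - (φ x₁) ^ 2)

noncomputable def EE (φ : A →ₗ[ℂ] ℂ) (x₁ x₂ : A) : ℂ :=
  (φ (x₁ ^ 2) - (φ x₁) ^ 2) * (φ (x₂ ^ 2) - (φ x₂) ^ 2) + c2 φ x₁ x₂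

noncomputable def NN (φ : A →ₗ[ℂ] ℂ) (x₁ x₂ : A) : ℂ :=
  φ x₁ * φ x₁ * (φ x₂ * φ x₂) - φ (x₁ ^ 2) * φ (x₂ ^ 2)

lemma NN_eq (φ : A →ₗ[ℂ] ℂ) (x₁ x₂ : A) : NN φ x₁ x₂ = -(EE φ x₁ x₂) := by
  rw [NN, EE, c2]; ring

lemma moments (φ : A →ₗ[ℂ] ℂ) (x₁ x₂ : A) (hbool : BoolPair φ x₁ x₂)
    (q : A) (hq : q = Complex.I • (x₁ * x₂ - x₂ * x₁)) :
    (∀ m : ℕ, φ (q ^ (2 * m + 1)) = 0) ∧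
    (∀ m : ℕ, φ (q ^ (2 * m + 2)) = c2 φ x₁ x₂ * (EE φ x₁ x₂) ^ m) := by
  have hX0 : (![x₁, x₂] 0 : A) = x₁ := rfl
  have hX1 : (![x₁, x₂] 1 : A) = x₂ := rfl
  have hub : ub x₁ x₂ true - ub x₁ x₂ false = x₁ * x₂ - x₂ * x₁ := by
    simp [ub, FB, SB]
  have hqD : ∀ k : ℕ, φ (q ^ k) = Complex.I ^ k * φ ((ub x₁ x₂ true - ub x₁ x₂ false) ^ k) := by
    intro k
    rw [hq, ← hub, smul_pow, map_smul, smul_eq_mul]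
  have hGT : ∀ n : ℕ, GFn φ x₁ x₂ true (n + 1)
      = φ x₂ * φ x₁ * GFn φ x₁ x₂ true n - φ (x₂ ^ 2) * GFn φ x₁ x₂ false n := by
    intro n; rw [GFn_succ_true, hX0, hX1]
  have hGF : ∀ n : ℕ, GFn φ x₁ x₂ false (n + 1)
      = φ (x₁ ^ 2) * GFn φ x₁ x₂ true n - φ x₁ * φ x₂ * GFn φ x₁ x₂ false n := by
    intro n; rw [GFn_succ_false, hX0, hX1]
  have hG0T : GFn φ x₁ x₂ true 0 = φ x₂ := by rw [GFn_zero]; rfl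
  have hG0F : GFn φ x₁ x₂ false 0 = φ x₁ := by rw [GFn_zero]; rfl
  have hG : ∀ m : ℕ, GFn φ x₁ x₂ true (2 * m) = NN φ x₁ x₂ ^ m * φ x₂
      ∧ GFn φ x₁ x₂ false (2 * m) = NN φ x₁ x₂ ^ m * φ x₁ := by
    intro m
    induction m with
    | zero =>
      constructor
      · rw [show 2 * 0 = 0 from rfl, hG0T, pow_zero, one_mul]
      · rw [show 2 * 0 = 0 from rfl, hG0F, pow_zero, one_mul]
    | succ m ih =>
      have e1 : 2 * (m + 1) = (2 * m + 1) + 1 := by ring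
      constructor
      · rw [e1, hGT, hGT, hGF, ih.1, ih.2, NN]; ring
      · rw [e1, hGF, hGT, hGF, ih.1, ih.2, NN]; ring
  have key : ∀ m : ℕ, (Complex.I) ^ (2 * m + 2) * NN φ x₁ x₂ ^ m = -(EE φ x₁ x₂ ^ m) := by
    intro m
    rw [show 2 * m + 2 = 2 * (m + 1) by ring, pow_mul, Complex.I_sq, NN_eq, neg_pow, pow_succ]
    have h1 : ((-1 : ℂ)) ^ (m * 2) = 1 := by
      rw [mul_comm, pow_mul]; norm_num
    ring_nf
    rw [h1, mul_one]
  constructor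
  · intro m
    rw [hqD, phi_D_pow φ x₁ x₂ hbool, hX0, hX1, (hG m).1, (hG m).2]
    ring
  · intro m
    have e2 : 2 * m + 2 = (2 * m + 1) + 1 := by ring
    rw [hqD, e2, phi_D_pow φ x₁ x₂ hbool, hX0, hX1]
    rw [hGT, hGF, (hG m).1, (hG m).2]
    have expand : φ x₁ * (φ x₂ * φ x₁ * (NN φ x₁ x₂ ^ m * φ x₂)
          - φ (x₂ ^ 2) * (NN φ x₁ x₂ ^ m * φ x₁))
        - φ x₂ * (φ (x₁ ^ 2) * (NN φ x₁ x₂ ^ m * φ x₂)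
          - φ x₁ * φ x₂ * (NN φ x₁ x₂ ^ m * φ x₁))
        = NN φ x₁ x₂ ^ m * (2 * (φ x₁)^2 * (φ x₂)^2 - (φ x₁)^2 * φ (x₂ ^ 2)
            - (φ x₂)^2 * φ (x₁ ^ 2)) := by ring
    rw [expand, ← e2, ← mul_assoc, key, c2]
    ring

end MOM

lemma cumulant_determination (c V : ℂ) (g mom : ℕ → ℂ)
    (hmom0 : mom 0 = 1)
    (hmomodd : ∀ m : ℕ, mom (2 * m + 1) = 0)
    (hmomeven : ∀ m : ℕ, mom (2 * m + 2) = c * (V + c) ^ m)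
    (hrec : ∀ n : ℕ, 1 ≤ n → mom n = ∑ j ∈ Finset.Icc 1 n, g j * mom (n - j)) :
    (∀ k : ℕ, 1 ≤ k → g (2 * k) = c * V ^ (k - 1)) ∧ (∀ k : ℕ, g (2 * k + 1) = 0) := by
  classical
  set r : ℕ → ℂ := fun t => if t % 2 = 0 ∧ 2 ≤ t then c * V ^ (t / 2 - 1) else 0 with hr
  have hrodd : ∀ t : ℕ, t % 2 = 1 → r t = 0 := by
    intro t ht
    simp only [hr]
    rw [if_neg (by omega)]
  have hrev : ∀ t : ℕ, t % 2 = 0 → 2 ≤ t → r t = c * V ^ (t / 2 - 1) := by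
    intro t ht h2
    simp only [hr]
    rw [if_pos ⟨ht, h2⟩]
  have hmodd : ∀ t : ℕ, t % 2 = 1 → mom t = 0 := by
    intro t ht
    obtain ⟨m, rfl⟩ : ∃ m, t = 2 * m + 1 := ⟨t / 2, by omega⟩
    exact hmomodd m
  have hmev : ∀ t : ℕ, t % 2 = 0 → 2 ≤ t → mom t = c * (V + c) ^ (t / 2 - 1) := by
    intro t ht h2
    obtain ⟨m, rfl⟩ : ∃ m, t = 2 * m + 2 := ⟨t / 2 - 1, by omega⟩
    rw [hmomeven m]
    congr 2
    omega
  have claimA : ∀ n : ℕ, 1 ≤ n → ∑ j ∈ Finset.Icc 1 n, r j * mom (n - j) = mom n := by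
    intro n hn
    rcases Nat.even_or_odd n with ⟨m, hm⟩ | ⟨m, hm⟩
    · -- n even
      obtain ⟨m, rfl, hm1⟩ : ∃ m', n = 2 * m' ∧ 1 ≤ m' := ⟨m, by omega, by omega⟩
      have hfil : ∑ j ∈ (Finset.Icc 1 (2 * m)).filter (fun j => j % 2 = 0),
            r j * mom (2 * m - j)
          = ∑ j ∈ Finset.Icc 1 (2 * m), r j * mom (2 * m - j) := by
        apply Finset.sum_filter_of_ne
        intro j _ hj
        by_contra hjo
        exact hj (by rw [hrodd j (by omega), zero_mul])
      rw [← hfil]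
      have hbij : ∑ j ∈ (Finset.Icc 1 (2 * m)).filter (fun j => j % 2 = 0),
            r j * mom (2 * m - j)
          = ∑ k ∈ Finset.Icc 1 m, r (2 * k) * mom (2 * m - 2 * k) := by
        apply Finset.sum_nbij' (i := fun j => j / 2) (j := fun k => 2 * k)
        · intro a ha
          simp only [Finset.mem_filter, Finset.mem_Icc] at ha
          simp only [Finset.mem_Icc]
          omega
        · intro a ha
          simp only [Finset.mem_Icc] at ha
          simp only [Finset.mem_filter, Finset.mem_Icc]
          omega
        · intro a ha
          simp only [Finset.mem_filter, Finset.mem_Icc] at ha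
          omega
        · intro a ha
          simp only [Finset.mem_Icc] at ha
          omega
        · intro a ha
          simp only [Finset.mem_filter, Finset.mem_Icc] at ha
          have h2 : 2 * (a / 2) = a := by omega
          rw [h2]
      rw [hbij]
      have hsplit : Finset.Icc 1 m = insert m (Finset.Icc 1 (m - 1)) := by
        ext x
        simp only [Finset.mem_insert, Finset.mem_Icc]
        omega
      rw [hsplit, Finset.sum_insert (by simp only [Finset.mem_Icc]; omega)]
      have hterm : r (2 * m) * mom (2 * m - 2 * m) = c * V ^ (m - 1) := by
        rw [Nat.sub_self, hmom0, mul_one, hrev (2 * m) (by omega) (by omega)]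
        congr 2
        omega
      rw [hterm]
      have hrest : ∀ k ∈ Finset.Icc 1 (m - 1),
          r (2 * k) * mom (2 * m - 2 * k)
            = c * c * (V ^ (k - 1) * (V + c) ^ (m - 1 - 1 - (k - 1))) := by
        intro k hk
        simp only [Finset.mem_Icc] at hk
        rw [hrev (2 * k) (by omega) (by omega), hmev (2 * m - 2 * k) (by omega) (by omega)]
        have e1 : (2 * k) / 2 - 1 = k - 1 := by omega
        have e2 : (2 * m - 2 * k) / 2 - 1 = m - 1 - 1 - (k - 1) := by omega
        rw [e1, e2]
        ring
      rw [Finset.sum_congr rfl hrest]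
      have hreidx : ∑ k ∈ Finset.Icc 1 (m - 1),
            c * c * (V ^ (k - 1) * (V + c) ^ (m - 1 - 1 - (k - 1)))
          = ∑ i ∈ Finset.range (m - 1), c * c * (V ^ i * (V + c) ^ (m - 1 - 1 - i)) := by
        apply Finset.sum_nbij' (i := fun k => k - 1) (j := fun i => i + 1)
        · intro a ha
          simp only [Finset.mem_Icc] at ha
          simp only [Finset.mem_range]
          omega
        · intro a ha
          simp only [Finset.mem_range] at ha
          simp only [Finset.mem_Icc]
          omega
        · intro a ha
          simp only [Finset.mem_Icc] at ha
          omega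
        · intro a ha
          simp only [Finset.mem_range] at ha
          omega
        · intro a _
          rfl
      rw [hreidx]
      have geo := geom_sum₂_mul V (V + c) (m - 1)
      have hmn : mom (2 * m) = c * (V + c) ^ (m - 1) := by
        rw [hmev (2 * m) (by omega) (by omega)]
        congr 2
        omega
      rw [hmn]
      have hpull : ∑ i ∈ Finset.range (m - 1), c * c * (V ^ i * (V + c) ^ (m - 1 - 1 - i))
          = c * c * ∑ i ∈ Finset.range (m - 1), V ^ i * (V + c) ^ (m - 1 - 1 - i) := by
        rw [Finset.mul_sum]
      rw [hpull]
      linear_combination (-c) * geo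
    · -- n odd
      obtain ⟨m, rfl⟩ : ∃ m', n = 2 * m' + 1 := ⟨m, by omega⟩
      rw [hmomodd m]
      apply Finset.sum_eq_zero
      intro j hj
      simp only [Finset.mem_Icc] at hj
      rcases Nat.even_or_odd j with ⟨t, ht⟩ | ⟨t, ht⟩
      · rw [hmodd (2 * m + 1 - j) (by omega), mul_zero]
      · rw [hrodd j (by omega), zero_mul]
  have main : ∀ n : ℕ, 1 ≤ n → g n = r n := by
    intro n
    induction n using Nat.strong_induction_on with
    | _ n ih =>
      intro hn
      have h1 := hrec n hn
      have h2 := claimA n hn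
      have hsplit : Finset.Icc 1 n = insert n (Finset.Icc 1 (n - 1)) := by
        ext x
        simp only [Finset.mem_insert, Finset.mem_Icc]
        omega
      rw [hsplit, Finset.sum_insert (by simp only [Finset.mem_Icc]; omega),
        Nat.sub_self, hmom0, mul_one] at h1 h2
      have h3 : ∑ j ∈ Finset.Icc 1 (n - 1), g j * mom (n - j)
          = ∑ j ∈ Finset.Icc 1 (n - 1), r j * mom (n - j) := by
        apply Finset.sum_congr rfl
        intro j hj
        simp only [Finset.mem_Icc] at hj
        rw [ih j (by omega) (by omega)]
      rw [h3] at h1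
      linear_combination -h1 - h2
  constructor
  · intro k hk
    rw [main (2 * k) (by omega), hrev (2 * k) (by omega) (by omega)]
    congr 2
    omega
  · intro k
    rw [main (2 * k + 1) (by omega), hrodd (2 * k + 1) (by omega)]

/-- For Boolean independent `x₁, x₂` and the commutator `q = i(x₁x₂ − x₂x₁)`:
`βₙ(q) = β₂(q)(β₂(x₁)β₂(x₂))^{(n−2)/2}` for `n` even and `βₙ(q) = 0` for `n` odd,
where `β₂(q) = β₁(x₁)²β₂(x₂) + β₁(x₂)²β₂(x₁)`, `β₁(x) = φ(x)`,
`β₂(x) = φ(x²) − φ(x)²`. -/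
theorem stmt18 {A : Type*} [Ring A] [Algebra ℂ A]
    (φ : A →ₗ[ℂ] ℂ) (hφ1 : φ 1 = 1)
    (x₁ x₂ : A) (hbool : BoolPair φ x₁ x₂)
    (βc : List A → ℂ) (hβ : IsBooleanCumulantFamily φ βc)
    (q : A) (hq : q = Complex.I • (x₁ * x₂ - x₂ * x₁)) :
    (∀ k : ℕ, 1 ≤ k →
      βc (List.replicate (2 * k) q)
        = ((φ x₁) ^ 2 * (φ (x₂ ^ 2) - (φ x₂) ^ 2)
            + (φ x₂) ^ 2 * (φ (x₁ ^ 2) - (φ x₁) ^ 2)) *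
          ((φ (x₁ ^ 2) - (φ x₁) ^ 2) * (φ (x₂ ^ 2) - (φ x₂) ^ 2)) ^ (k - 1)) ∧
    (∀ k : ℕ, βc (List.replicate (2 * k + 1) q) = 0) := by
  have hmoments := moments φ x₁ x₂ hbool q hq
  set momf : ℕ → ℂ := fun t => if t = 0 then 1 else if t % 2 = 1 then 0
      else c2 φ x₁ x₂ * EE φ x₁ x₂ ^ (t / 2 - 1) with hmomf
  have hmom : ∀ t : ℕ, φ (q ^ t) = momf t := by
    intro t
    rcases Nat.eq_zero_or_pos t with rfl | ht
    · rw [pow_zero, hφ1]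
      simp [hmomf]
    rcases Nat.even_or_odd t with ⟨m, hm⟩ | ⟨m, hm⟩
    · obtain ⟨k, rfl⟩ : ∃ k, t = 2 * k + 2 := ⟨m - 1, by omega⟩
      rw [hmoments.2 k]
      simp only [hmomf]
      rw [if_neg (by omega), if_neg (by omega)]
      congr 2
      omega
    · obtain ⟨k, rfl⟩ : ∃ k, t = 2 * k + 1 := ⟨m, by omega⟩
      rw [hmoments.1 k]
      simp only [hmomf]
      rw [if_neg (by omega), if_pos (by omega)]
  have hS : ∀ t : ℕ, (∑ P ∈ intSet t, ∏ B ∈ P.parts, βc (List.replicate B.card q)) = momf t := by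
    intro t
    rcases Nat.eq_zero_or_pos t with rfl | ht
    · rw [intSet_zero_sum (fun j => βc (List.replicate j q))]
      simp [hmomf]
    · have hmc := hβ t (fun _ => q) ht
      have hblk : ∀ P ∈ intSet t, (∏ B ∈ P.parts, βc (blk (fun _ : Fin t => q) B))
          = ∏ B ∈ P.parts, βc (List.replicate B.card q) := by
        intro P _
        apply Finset.prod_congr rfl
        intro B _
        congr 1
        rw [blk, List.map_const', Finset.length_sort]
      rw [Finset.sum_congr rfl hblk] at hmc
      rw [← hmc]
      rw [show (List.ofFn (fun _ : Fin t => q)).prod = q ^ t from by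
        rw [List.ofFn_const, List.prod_replicate]]
      exact hmom t
  have hrec : ∀ n : ℕ, 1 ≤ n → momf n
      = ∑ j ∈ Finset.Icc 1 n, βc (List.replicate j q) * momf (n - j) := by
    intro n hn
    rw [← hS n, sum_intSet_rec (fun j => βc (List.replicate j q)) hn]
    apply Finset.sum_congr rfl
    intro j _
    rw [hS (n - j)]
  have hdet := cumulant_determination (c2 φ x₁ x₂)
    ((φ (x₁ ^ 2) - (φ x₁) ^ 2) * (φ (x₂ ^ 2) - (φ x₂) ^ 2))
    (fun t => βc (List.replicate t q)) momf
    (by simp [hmomf])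
    (by
      intro m
      simp only [hmomf]
      rw [if_neg (by omega), if_pos (by omega)])
    (by
      intro m
      simp only [hmomf]
      rw [if_neg (by omega), if_neg (by omega)]
      rw [show (φ (x₁ ^ 2) - (φ x₁) ^ 2) * (φ (x₂ ^ 2) - (φ x₂) ^ 2) + c2 φ x₁ x₂
          = EE φ x₁ x₂ from rfl]
      congr 2
      omega)
    hrec
  constructor
  · intro k hk
    have hres := hdet.1 k hk
    rw [c2] at hres
    exact hres
  · intro k
    exact hdet.2 k
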